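/- Let c > 0, α > 0, d_A > 0, d_B > 0, and weights w_A > 0, w_B > 0. Define R : ℝ → ℝ by R(u) = w_A·(s(2c·d_A) − s(2u·d_A)) + w_B·(s(2u·d_B) − s(−2αc·d_B)). If w_B·d_B·s′(2c·d_B) > w_A·d_A·s′(2c·d_A), then R′(c) > 0 and consequently there exists u < c with R(u) < R(c); in particular, u = c is not a minimizer of R. (This is the derivative argument in the proof of Theorem 2 showing that when temperature scaling is fit first on the full mixture of inlier and outlier regions, the optimal inverse temperature differs from the inlier-calibrated slope c, so subsequent selection cannot achieve zero calibration error.) -/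

import Mathlib

/-- The logistic sigmoid function. -/
noncomputable def sig (t : ℝ) : ℝ := 1 / (1 + Real.exp (-t))

/-- The derivative of the logistic sigmoid function. -/
noncomputable def sig' (t : ℝ) : ℝ := Real.exp (-t) / (1 + Real.exp (-t)) ^ 2

/-- Derivative argument in the proof of Theorem 2: when the outlier term
dominates, the weighted calibration error `R` has strictly positive derivative
at the inlier-calibrated slope `c`, so `u = c` is not a minimizer of `R`. -/
theorem stmt15 (c α dA dB wA wB : ℝ) (hc : 0 < c) (hα : 0 < α) (hdA : 0 < dA)
    (hdB : 0 < dB) (hwA : 0 < wA) (hwB : 0 < wB)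
    (R : ℝ → ℝ)
    (hR : ∀ u : ℝ, R u = wA * (sig (2 * c * dA) - sig (2 * u * dA)) +
      wB * (sig (2 * u * dB) - sig (-2 * α * c * dB)))
    (hdom : wA * dA * sig' (2 * c * dA) < wB * dB * sig' (2 * c * dB)) :
    0 < deriv R c ∧ ∃ u : ℝ, u < c ∧ R u < R c := by
  have hsig : ∀ t : ℝ, HasDerivAt sig (sig' t) t := fun t => by
    have hne : (1 + Real.exp (-t)) ≠ 0 := by positivity
    have h1 : HasDerivAt (fun t : ℝ => 1 + Real.exp (-t)) (-Real.exp (-t)) t := by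
      simpa using ((Real.hasDerivAt_exp (-t)).comp t (hasDerivAt_neg t)).const_add 1
    have h2 := h1.inv hne
    have hfun : sig = fun t : ℝ => (1 + Real.exp (-t))⁻¹ :=
      funext fun t => by simp [sig, one_div]
    rw [hfun, sig']
    exact h2.congr_deriv (by ring)
  set D : ℝ := wA * (0 - 2 * dA * sig' (2 * c * dA)) +
      wB * (2 * dB * sig' (2 * c * dB) - 0) with hD
  have hRd : HasDerivAt R D c := by
    have hA : HasDerivAt (fun u : ℝ => sig (2 * u * dA)) (2 * dA * sig' (2 * c * dA)) c := by
      have := (hsig (2 * c * dA)).comp c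
        (((hasDerivAt_id c).const_mul 2).mul_const dA)
      simpa [Function.comp_def, mul_comm, mul_left_comm, mul_assoc] using this
    have hB : HasDerivAt (fun u : ℝ => sig (2 * u * dB)) (2 * dB * sig' (2 * c * dB)) c := by
      have := (hsig (2 * c * dB)).comp c
        (((hasDerivAt_id c).const_mul 2).mul_const dB)
      simpa [Function.comp_def, mul_comm, mul_left_comm, mul_assoc] using this
    have : HasDerivAt (fun u : ℝ => wA * (sig (2 * c * dA) - sig (2 * u * dA)) +
        wB * (sig (2 * u * dB) - sig (-2 * α * c * dB))) D c := by
      exact (((hasDerivAt_const c (sig (2 * c * dA))).sub hA).const_mul wA).add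
        (((hB.sub (hasDerivAt_const c (sig (-2 * α * c * dB))))).const_mul wB)
    exact this.congr_of_eventuallyEq (Filter.Eventually.of_forall fun u => hR u)
  have hDpos : 0 < D := by
    have : wA * (2 * dA * sig' (2 * c * dA)) < wB * (2 * dB * sig' (2 * c * dB)) := by
      nlinarith [hdom]
    simp only [hD]; nlinarith
  have hderiv : deriv R c = D := hRd.deriv
  refine ⟨by rw [hderiv]; exact hDpos, ?_⟩
  have hslope := hasDerivAt_iff_tendsto_slope.mp hRd
  have hev : ∀ᶠ u in nhdsWithin c {c}ᶜ, 0 < slope R c u :=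
    hslope.eventually (eventually_gt_nhds hDpos)
  have hle : nhdsWithin c (Set.Iio c) ≤ nhdsWithin c {c}ᶜ :=
    nhdsWithin_mono c (fun x hx => ne_of_lt hx)
  have hev' : ∀ᶠ u in nhdsWithin c (Set.Iio c), 0 < slope R c u := hle hev
  have hmem : ∀ᶠ u in nhdsWithin c (Set.Iio c), u ∈ Set.Iio c :=
    self_mem_nhdsWithin
  obtain ⟨u, hu1, hu2⟩ := ((hev'.and hmem).exists)
  refine ⟨u, hu2, ?_⟩
  have hne : u - c < 0 := sub_neg.mpr hu2
  rw [slope_def_field] at hu1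
  rcases div_pos_iff.mp hu1 with ⟨h1, h2⟩ | ⟨h1, h2⟩
  · linarith
  · linarith
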